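/- For a semi-external 𝕀' and any I' ∈ 𝕀' with Y ⊂ X\I', the polynomial p_Y lies in span{Q_I : I ∈ 𝕀'}; consequently P_+(X,𝕀') ⊂ span{Q_I : I ∈ 𝕀'}. -/

import Mathlib

open MvPolynomial

attribute [local instance] Classical.propDecidable

noncomputable section

/-- The linear polynomial `t ↦ v ⬝ t` attached to a vector `v ∈ ℝⁿ`. -/
def lin (n : ℕ) (v : Fin n → ℝ) : MvPolynomial (Fin n) ℂ :=
  ∑ i, MvPolynomial.C (v i : ℂ) * MvPolynomial.X i

/-- `p_Y`, the product of the linear polynomials over an index set `Y`. -/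
def pProd {n : ℕ} {ι : Type*} (x : ι → Fin n → ℝ) (Y : Finset ι) : MvPolynomial (Fin n) ℂ :=
  ∏ i ∈ Y, lin n (x i)

/-- The differential operator `p(D)` (substitute `∂/∂tᵢ` for `tᵢ` in `p`). -/
def pDop {n : ℕ} (p : MvPolynomial (Fin n) ℂ) : Module.End ℂ (MvPolynomial (Fin n) ℂ) :=
  (AddMonoidAlgebra.coeff p).sum fun m c =>
    c • (((List.finRange n).map fun i =>
      ((MvPolynomial.pderiv i).toLinearMap : Module.End ℂ (MvPolynomial (Fin n) ℂ)) ^ m i).prod)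

/-- The kernel of a polynomial ideal: all `q` with `p(D)q = 0` for every `p ∈ I`. -/
def dKer {n : ℕ} (I : Ideal (MvPolynomial (Fin n) ℂ)) : Submodule ℂ (MvPolynomial (Fin n) ℂ) :=
  ⨅ p ∈ I, LinearMap.ker (pDop p)

/-- Standard inner product on `ℝⁿ`. -/
def dotp {n : ℕ} (u v : Fin n → ℝ) : ℝ := ∑ i, u i * v i

/-- `B` is a basis drawn from the multiset `x`. -/
def IsBasisSet {n : ℕ} {ι : Type*} (x : ι → Fin n → ℝ) (B : Finset ι) : Prop :=
  LinearIndependent ℝ (fun b : {i // i ∈ B} => x b.1) ∧ Submodule.span ℝ (x '' ↑B) = ⊤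

/-- `I` is an independent subset of the multiset `x`. -/
def IsIndepSet {n : ℕ} {ι : Type*} (x : ι → Fin n → ℝ) (I : Finset ι) : Prop :=
  LinearIndependent ℝ (fun b : {i // i ∈ I} => x b.1)

/-- `F` is a facet hyperplane of `X`. -/
def IsFacet {n : ℕ} {ι : Type*} (x : ι → Fin n → ℝ) (F : Submodule ℝ (Fin n → ℝ)) : Prop :=
  Module.finrank ℝ F = n - 1 ∧ ∃ Y : Finset ι, Submodule.span ℝ (x '' ↑Y) = F

/-- `η` is a (nonzero) normal to the subspace `F`. -/
def IsNormal {n : ℕ} (η : Fin n → ℝ) (F : Submodule ℝ (Fin n → ℝ)) : Prop :=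
  η ≠ 0 ∧ ∀ v ∈ F, dotp η v = 0

/-- `m(F)`: number of elements of `X` outside a subspace `F`. -/
def mult {n : ℕ} {ι : Type*} [Fintype ι] (x : ι → Fin n → ℝ) (F : Submodule ℝ (Fin n → ℝ)) : ℕ :=
  (Finset.univ.filter fun i => x i ∉ F).card

/-- The central ideal `I(X)`. -/
def centralIdeal {n : ℕ} {ι : Type*} [Fintype ι] (x : ι → Fin n → ℝ) :
    Ideal (MvPolynomial (Fin n) ℂ) :=
  Ideal.span {p | ∃ F η, IsFacet x F ∧ IsNormal η F ∧ p = lin n η ^ mult x F}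

/-- The central `P`-space of the sub-multiset indexed by `A`. -/
def centralPOn {n : ℕ} {ι : Type*} [Fintype ι] [DecidableEq ι] (x : ι → Fin n → ℝ)
    (A : Finset ι) : Submodule ℂ (MvPolynomial (Fin n) ℂ) :=
  Submodule.span ℂ
    {p | ∃ Y : Finset ι, Y ⊆ A ∧
      Module.finrank ℝ (Submodule.span ℝ (x '' ↑(A \ Y))) = n ∧ p = pProd x Y}

/-- `X(Y)` with respect to the order on indices. -/
def XofY {n N : ℕ} (x : Fin N → Fin n → ℝ) (Y : Finset (Fin N)) : Finset (Fin N) :=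
  Finset.univ.filter fun i => i ∉ Y ∧ x i ∉ Submodule.span ℝ (x '' {j | j ∈ Y ∧ j < i})

/-- the valuation `val(Y) = #X(Y)`. -/
def valu {n N : ℕ} (x : Fin N → Fin n → ℝ) (Y : Finset (Fin N)) : ℕ := (XofY x Y).card

/-- `Q_Y := p_{X(Y)}`. -/
def QB {n N : ℕ} (x : Fin N → Fin n → ℝ) (Y : Finset (Fin N)) : MvPolynomial (Fin n) ℂ :=
  pProd x (XofY x Y)

/-- A semi-external collection of independent sets. -/
def SemiExternal {n N : ℕ} (x : Fin N → Fin n → ℝ) (I' : Set (Finset (Fin N))) : Prop :=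
  (∀ I ∈ I', IsIndepSet x I) ∧
  ∀ I ∈ I', ∀ J : Finset (Fin N), IsIndepSet x J →
    Submodule.span ℝ (x '' ↑I) ≤ Submodule.span ℝ (x '' ↑J) → J ∈ I'

/-- `P₊(X, 𝕀')`. -/
def PplusOn {n N : ℕ} (x : Fin N → Fin n → ℝ) (I' : Set (Finset (Fin N))) :
    Submodule ℂ (MvPolynomial (Fin n) ℂ) :=
  Submodule.span ℂ {p | ∃ Y : Finset (Fin N), (∃ I ∈ I', Y ∩ I = ∅) ∧ p = pProd x Y}

/-- `Π⁰_j(S^⊥)`: homogeneous polynomials of degree `j` annihilated by directional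
derivatives along `S`. -/
def homPerp (n j : ℕ) (S : Submodule ℝ (Fin n → ℝ)) : Set (MvPolynomial (Fin n) ℂ) :=
  {p | p ∈ MvPolynomial.homogeneousSubmodule (Fin n) ℂ j ∧ ∀ η ∈ S, pDop (lin n η) p = 0}

/-- `Π⁰_j(W)`: homogeneous polynomials of degree `j` which are functions on `W`
(annihilated by derivatives along `W^⊥`). -/
def homOn (n j : ℕ) (W : Submodule ℝ (Fin n → ℝ)) : Set (MvPolynomial (Fin n) ℂ) :=
  {p | p ∈ MvPolynomial.homogeneousSubmodule (Fin n) ℂ j ∧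
    ∀ η : Fin n → ℝ, (∀ w ∈ W, dotp η w = 0) → pDop (lin n η) p = 0}

/-- `S(X,𝕀')`: spans of independent sets outside `𝕀'`. -/
def exSpans {n N : ℕ} (x : Fin N → Fin n → ℝ) (I' : Set (Finset (Fin N))) :
    Set (Submodule ℝ (Fin n → ℝ)) :=
  {S | ∃ I : Finset (Fin N), IsIndepSet x I ∧ I ∉ I' ∧ Submodule.span ℝ (x '' ↑I) = S}

/-- The external ideal `I₊(X)`. -/
def IplusIdeal {n : ℕ} {ι : Type*} [Fintype ι] (x : ι → Fin n → ℝ) :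
    Ideal (MvPolynomial (Fin n) ℂ) :=
  Ideal.span {p | ∃ F η, IsFacet x F ∧ IsNormal η F ∧ p = lin n η ^ (mult x F + 1)}

/-- The semi-external ideal `I₊(X,𝕀')`. -/
def IplusOn {n N : ℕ} (x : Fin N → Fin n → ℝ) (I' : Set (Finset (Fin N))) :
    Ideal (MvPolynomial (Fin n) ℂ) :=
  IplusIdeal x ⊔ Ideal.span {p | ∃ S ∈ exSpans x I', p ∈ homPerp n (mult x S) S}

/-- `expPart V c j`: the degree-`j` homogeneous part of `∑_{v ∈ V} c_v e_v`. -/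
def expPart (n : ℕ) (V : Finset (Fin n → ℝ)) (c : (Fin n → ℝ) → ℂ) (j : ℕ) :
    MvPolynomial (Fin n) ℂ :=
  ((j.factorial : ℂ))⁻¹ • ∑ v ∈ V, c v • (lin n v) ^ j

/-- The least space `Π(V)` of a finite point set `V`. -/
def leastSpace (n : ℕ) (V : Finset (Fin n → ℝ)) : Submodule ℂ (MvPolynomial (Fin n) ℂ) :=
  Submodule.span ℂ
    {p | ∃ (c : (Fin n → ℝ) → ℂ) (j₀ : ℕ),
      p = expPart n V c j₀ ∧ p ≠ 0 ∧ ∀ j < j₀, expPart n V c j = 0}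

/-- Simplicity of the arrangement `H(X,λ)`. -/
def SimpleArrangement {n N : ℕ} (x : Fin N → Fin n → ℝ) (lam : Fin N → ℝ) : Prop :=
  ∀ Y : Finset (Fin N), (∃ t : Fin n → ℝ, ∀ i ∈ Y, dotp (x i) t = lam i) →
    LinearIndependent ℝ (fun i : {i // i ∈ Y} => x i.1)

/-- `b` is `I`-internally active in `B`. -/
def IActive {n N : ℕ} (x : Fin N → Fin n → ℝ) (Iset B : Finset (Fin N)) (b : Fin N) : Prop :=
  b ∈ B ∧ b ∈ Iset ∧ ∀ j, x j ∉ Submodule.span ℝ (x '' ↑(B.erase b)) → j ≤ b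

/-- `B` is an `I`-internal basis. -/
def IInternal {n N : ℕ} (x : Fin N → Fin n → ℝ) (Iset B : Finset (Fin N)) : Prop :=
  IsBasisSet x B ∧ ∀ b, ¬ IActive x Iset B b

/-- The semi-internal space `P₋(X,I)`. -/
def Pminus {n N : ℕ} (x : Fin N → Fin n → ℝ) (Iset : Finset (Fin N)) :
    Submodule ℂ (MvPolynomial (Fin n) ℂ) :=
  ⨅ b ∈ Iset, centralPOn x (Finset.univ.erase b)

/-- The semi-internal ideal `I₋(X,I)`. -/
def IminusOn {n N : ℕ} (x : Fin N → Fin n → ℝ) (Iset : Finset (Fin N)) :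
    Ideal (MvPolynomial (Fin n) ℂ) :=
  centralIdeal x ⊔
    Ideal.span {p | ∃ F η, IsFacet x F ∧ IsNormal η F ∧ ¬ (x '' ↑Iset ⊆ ↑F) ∧
      p = lin n η ^ (mult x F - 1)}

/-- The semi-internal ideal `J₋(X,I)` of `I`-long polynomials. -/
def JminusOn {n N : ℕ} (x : Fin N → Fin n → ℝ) (Iset : Finset (Fin N)) :
    Ideal (MvPolynomial (Fin n) ℂ) :=
  Ideal.span {p | ∃ Y : Finset (Fin N),
    (∀ B, IInternal x Iset B → (Y ∩ B).Nonempty) ∧ p = pProd x Y}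

/-- Greedy completion `ex(I)` of an independent set by the auxiliary ordered basis `b0`. -/
def exComp {n N : ℕ} (x : Fin N → Fin n → ℝ) (b0 : Fin n → Fin n → ℝ) (I : Finset (Fin N)) :
    Finset (Fin N ⊕ Fin n) :=
  I.image Sum.inl ∪
    (Finset.univ.filter fun k : Fin n =>
      b0 k ∉ Submodule.span ℝ (x '' ↑I ∪ b0 '' {j | j < k})).image Sum.inr


section ZonotopalHelpers

variable {n N : ℕ}

lemma lin_zero : lin n (0 : Fin n → ℝ) = 0 := by simp [lin]

lemma lin_add (v w : Fin n → ℝ) : lin n (v + w) = lin n v + lin n w := by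
  simp only [lin, Pi.add_apply]
  rw [← Finset.sum_add_distrib]
  refine Finset.sum_congr rfl fun i _ => ?_
  push_cast
  rw [map_add, add_mul]

lemma lin_smul (c : ℝ) (v : Fin n → ℝ) : lin n (c • v) = (c : ℂ) • lin n v := by
  simp only [lin, Pi.smul_apply, smul_eq_mul, Finset.smul_sum]
  refine Finset.sum_congr rfl fun i _ => ?_
  push_cast
  rw [map_mul, smul_eq_C_mul, mul_assoc]

lemma lin_sum (x : Fin N → Fin n → ℝ) (T : Finset (Fin N)) (c : Fin N → ℝ) :
    lin n (∑ k ∈ T, c k • x k) = ∑ k ∈ T, ((c k : ℂ)) • lin n (x k) := by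
  classical
  induction T using Finset.induction with
  | empty => simp [lin_zero]
  | insert _ _ hT ih =>
      rename_i a s
      rw [Finset.sum_insert hT, Finset.sum_insert hT, lin_add, lin_smul, ih]

lemma exists_rep {x : Fin N → Fin n → ℝ} {T : Finset (Fin N)} {v : Fin n → ℝ}
    (h : v ∈ Submodule.span ℝ (x '' ↑T)) : ∃ c : Fin N → ℝ, ∑ k ∈ T, c k • x k = v := by
  rw [Finsupp.mem_span_image_iff_linearCombination] at h
  obtain ⟨l, hl, hlv⟩ := h
  refine ⟨l, ?_⟩
  rw [Finsupp.linearCombination_apply, Finsupp.sum] at hlv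
  rw [← hlv]
  refine (Finset.sum_subset ?_ fun k _ hk => ?_).symm
  · exact_mod_cast (Finsupp.mem_supported ℝ l).1 hl
  · simp [Finsupp.notMem_support_iff.1 hk]

lemma isIndepSet_iff_card (x : Fin N → Fin n → ℝ) (J : Finset (Fin N)) :
    IsIndepSet x J ↔ J.card = Set.finrank ℝ (x '' ↑J) := by
  unfold IsIndepSet
  rw [linearIndependent_iff_card_eq_finrank_span]
  have h1 : Set.range (fun b : {i // i ∈ J} => x b.1) = x '' ↑J := by
    ext v
    constructor
    · rintro ⟨b, rfl⟩; exact ⟨b.1, b.2, rfl⟩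
    · rintro ⟨a, ha, rfl⟩; exact ⟨⟨a, ha⟩, rfl⟩
  rw [h1, Fintype.card_coe]

lemma mem_image_finset {x : Fin N → Fin n → ℝ} {T : Finset (Fin N)} {k : Fin N}
    (hk : k ∈ T) : x k ∈ x '' ↑T := ⟨k, by exact_mod_cast hk, rfl⟩

lemma exchange_lemma (x : Fin N → Fin n → ℝ) {I : Finset (Fin N)} (hI : IsIndepSet x I)
    {i j : Fin N} (hiI : i ∉ I) (hjI : j ∈ I) {T : Finset (Fin N)} (hTI : T ⊆ I)
    {c : Fin N → ℝ} (hsum : ∑ k ∈ T, c k • x k = x i) (hjT : j ∈ T) (hcj : c j ≠ 0) :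
    IsIndepSet x (insert i (I.erase j)) ∧
      Submodule.span ℝ (x '' ↑(insert i (I.erase j))) = Submodule.span ℝ (x '' ↑I) := by
  classical
  have hij : i ≠ j := fun h => hiI (h ▸ hjI)
  have hxi_mem : x i ∈ Submodule.span ℝ (x '' ↑I) := by
    rw [← hsum]
    exact Submodule.sum_mem _ fun k hk =>
      Submodule.smul_mem _ _ (Submodule.subset_span (mem_image_finset (hTI hk)))
  have hspan : Submodule.span ℝ (x '' ↑(insert i (I.erase j))) = Submodule.span ℝ (x '' ↑I) := by
    apply le_antisymm
    · rw [Submodule.span_le]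
      rintro v ⟨a, ha, rfl⟩
      rw [Finset.coe_insert, Set.mem_insert_iff] at ha
      rcases ha with rfl | ha
      · exact hxi_mem
      · rw [Finset.mem_coe, Finset.mem_erase] at ha
        exact Submodule.subset_span (mem_image_finset ha.2)
    · rw [Submodule.span_le]
      rintro v ⟨a, ha, rfl⟩
      rw [Finset.mem_coe] at ha
      by_cases haj : a = j
      · subst haj
        have h1 : c a • x a = x i - ∑ k ∈ T.erase a, c k • x k := by
          rw [← Finset.add_sum_erase T _ hjT] at hsum
          exact eq_sub_of_add_eq hsum
        have h2 : x a = (c a)⁻¹ • (x i - ∑ k ∈ T.erase a, c k • x k) := by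
          rw [← h1, smul_smul, inv_mul_cancel₀ hcj, one_smul]
        rw [SetLike.mem_coe, h2]
        refine Submodule.smul_mem _ _ (Submodule.sub_mem _ ?_ ?_)
        · exact Submodule.subset_span (mem_image_finset (Finset.mem_insert_self _ _))
        · refine Submodule.sum_mem _ fun k hk => Submodule.smul_mem _ _
            (Submodule.subset_span (mem_image_finset ?_))
          rw [Finset.mem_erase] at hk
          exact Finset.mem_insert_of_mem (Finset.mem_erase.2 ⟨hk.1, hTI hk.2⟩)
      · exact Submodule.subset_span
          (mem_image_finset (Finset.mem_insert_of_mem (Finset.mem_erase.2 ⟨haj, ha⟩)))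
  refine ⟨?_, hspan⟩
  rw [isIndepSet_iff_card] at hI ⊢
  have hcard : (insert i (I.erase j)).card = I.card := by
    rw [Finset.card_insert_of_notMem (fun h => hiI (Finset.mem_of_mem_erase h)),
      Finset.card_erase_of_mem hjI]
    have : 0 < I.card := Finset.card_pos.2 ⟨j, hjI⟩
    omega
  rw [hcard, Set.finrank, hspan, ← Set.finrank, ← hI]

lemma indep_insert (x : Fin N → Fin n → ℝ) {I : Finset (Fin N)} (hI : IsIndepSet x I)
    {i : Fin N} (hx0i : x i ≠ 0) (hni : x i ∉ Submodule.span ℝ (x '' ↑I)) :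
    IsIndepSet x (insert i I) := by
  classical
  have hiI : i ∉ I := fun h => hni (Submodule.subset_span (mem_image_finset h))
  rw [isIndepSet_iff_card] at hI ⊢
  rw [Finset.card_insert_of_notMem hiI]
  have himg : (x '' ↑(insert i I)) = insert (x i) (x '' ↑I) := by
    rw [Finset.coe_insert, Set.image_insert_eq]
  rw [Set.finrank, himg, Submodule.span_insert]
  have hinf : (Submodule.span ℝ {x i}) ⊓ (Submodule.span ℝ (x '' ↑I)) = ⊥ := by
    rw [eq_bot_iff]
    rintro v hv
    rw [Submodule.mem_inf] at hv
    obtain ⟨a, rfl⟩ := Submodule.mem_span_singleton.1 hv.1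
    rcases eq_or_ne a 0 with rfl | ha
    · simp
    · exfalso
      apply hni
      have := Submodule.smul_mem _ a⁻¹ hv.2
      rwa [smul_smul, inv_mul_cancel₀ ha, one_smul] at this
  have hdim := Submodule.finrank_sup_add_finrank_inf_eq (Submodule.span ℝ {x i})
    (Submodule.span ℝ (x '' ↑I))
  rw [hinf, finrank_bot, finrank_span_singleton hx0i] at hdim
  rw [Set.finrank] at hI
  omega

lemma set_filter_lt (I0 : Finset (Fin N)) (i : Fin N) :
    {j | j ∈ I0 ∧ j < i} = (↑(I0.filter (fun j => j < i)) : Set (Fin N)) := by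
  ext a; simp

lemma key_lemma (x : Fin N → Fin n → ℝ) (hx0 : ∀ i, x i ≠ 0)
    (I' : Set (Finset (Fin N))) (hI' : SemiExternal x I') :
    ∀ m k (Y I0 : Finset (Fin N)), (∑ y ∈ Y, (y : ℕ)) < m →
      (N - I0.card) * (N * N + 1) + (∑ b ∈ I0, (b : ℕ)) < k →
      I0 ∈ I' → Y ∩ I0 = ∅ →
      pProd x Y ∈ Submodule.span ℂ {p | ∃ I ∈ I', p = QB x I} := by
  classical
  intro m
  induction m with
  | zero => intro k Y I0 hY; exact absurd hY (Nat.not_lt_zero _)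
  | succ m ihm =>
    intro k
    induction k with
    | zero => intro Y I0 _ hI; exact absurd hI (Nat.not_lt_zero _)
    | succ k ihk =>
      intro Y I0 hYm hIk hI0mem hdisj
      have hd : ∀ a ∈ Y, a ∉ I0 := by
        intro a haY haI
        have : a ∈ Y ∩ I0 := Finset.mem_inter.2 ⟨haY, haI⟩
        rw [hdisj] at this
        exact Finset.notMem_empty a this
      by_cases h1 : ∃ i ∈ Y, x i ∈ Submodule.span ℝ (x '' {j | j ∈ I0 ∧ j < i})
      · -- Move A
        obtain ⟨i, hiY, hispan⟩ := h1
        rw [set_filter_lt] at hispan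
        set T := I0.filter (fun j => j < i) with hT
        obtain ⟨c, hc⟩ := exists_rep hispan
        have hTI : T ⊆ I0 := Finset.filter_subset _ _
        have hiI0 : i ∉ I0 := hd i hiY
        have hdecomp : pProd x Y =
            ∑ j ∈ T, ((c j : ℂ)) • (lin n (x j) * pProd x (Y.erase i)) := by
          have h2 : pProd x Y = lin n (x i) * pProd x (Y.erase i) := by
            unfold pProd
            rw [Finset.mul_prod_erase Y (fun kk => lin n (x kk)) hiY]
          rw [h2, ← hc, lin_sum, Finset.sum_mul]
          exact Finset.sum_congr rfl fun j _ => (smul_mul_assoc _ _ _)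
        rw [hdecomp]
        refine Submodule.sum_mem _ fun j hjT => ?_
        by_cases hcj : c j = 0
        · simp [hcj]
        · have hjI0 : j ∈ I0 := hTI hjT
          have hji : j < i := (Finset.mem_filter.1 hjT).2
          have hij : i ≠ j := fun h => (lt_irrefl i (h ▸ hji))
          have hjY : j ∉ Y := fun h => hd j h hjI0
          have hjY' : j ∉ Y.erase i := fun h => hjY (Finset.mem_of_mem_erase h)
          have hterm : lin n (x j) * pProd x (Y.erase i) = pProd x (insert j (Y.erase i)) := by
            unfold pProd
            rw [Finset.prod_insert hjY']
          rw [hterm]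
          refine Submodule.smul_mem _ _ ?_
          obtain ⟨hind', hspan'⟩ :=
            exchange_lemma x (hI'.1 I0 hI0mem) hiI0 hjI0 hTI hc hjT hcj
          have hmem' : insert i (I0.erase j) ∈ I' :=
            hI'.2 I0 hI0mem _ hind' (le_of_eq hspan'.symm)
          have hdisj' : (insert j (Y.erase i)) ∩ (insert i (I0.erase j)) = ∅ := by
            apply Finset.eq_empty_iff_forall_notMem.2
            intro a ha
            rw [Finset.mem_inter, Finset.mem_insert, Finset.mem_erase,
              Finset.mem_insert, Finset.mem_erase] at ha
            obtain ⟨ha1, ha2⟩ := ha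
            rcases ha1 with rfl | ⟨hane, haY⟩
            · rcases ha2 with rfl | ⟨hane2, _⟩
              · exact hij rfl
              · exact hane2 rfl
            · rcases ha2 with rfl | ⟨_, haI⟩
              · exact hane rfl
              · exact hd a haY haI
          have hsum1 : (i : ℕ) + (∑ y ∈ Y.erase i, (y : ℕ)) = ∑ y ∈ Y, (y : ℕ) :=
            Finset.add_sum_erase Y _ hiY
          have hsum2 : (∑ y ∈ insert j (Y.erase i), (y : ℕ)) =
              (j : ℕ) + ∑ y ∈ Y.erase i, (y : ℕ) := Finset.sum_insert hjY'
          have hjiN : (j : ℕ) < (i : ℕ) := hji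
          exact ihm ((N - (insert i (I0.erase j)).card) * (N * N + 1) +
              (∑ b ∈ insert i (I0.erase j), (b : ℕ)) + 1)
            (insert j (Y.erase i)) (insert i (I0.erase j))
            (by omega) (Nat.lt_succ_self _) hmem' hdisj'
      · push_neg at h1
        have hYsub : Y ⊆ XofY x I0 := by
          intro a haY
          unfold XofY
          rw [Finset.mem_filter]
          exact ⟨Finset.mem_univ a, hd a haY, h1 a haY⟩
        by_cases h2 : XofY x I0 ⊆ Y
        · have hYeq : Y = XofY x I0 := Finset.Subset.antisymm hYsub h2
          exact Submodule.subset_span ⟨I0, hI0mem, by rw [hYeq]; rfl⟩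
        · obtain ⟨i, hiX, hiY⟩ := Finset.not_subset.1 h2
          have hiX' := hiX
          unfold XofY at hiX'
          rw [Finset.mem_filter] at hiX'
          obtain ⟨-, hiI0, hinsp⟩ := hiX'
          by_cases h3 : x i ∈ Submodule.span ℝ (x '' ↑I0)
          · -- Move C: exchange within I0
            obtain ⟨c, hc⟩ := exists_rep h3
            have hex : ∃ j ∈ I0, c j ≠ 0 ∧ i < j := by
              by_contra hno
              push_neg at hno
              apply hinsp
              rw [set_filter_lt]
              have heq : x i = ∑ k ∈ I0.filter (fun j => j < i), c k • x k := by
                rw [← hc]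
                refine (Finset.sum_subset (Finset.filter_subset _ _) fun k hkI0 hkT => ?_).symm
                rw [Finset.mem_filter] at hkT
                have hnki : ¬ k < i := fun h => hkT ⟨hkI0, h⟩
                have hki : k ≠ i := fun h => hiI0 (h ▸ hkI0)
                have hik : i < k := lt_of_le_of_ne (not_lt.1 hnki) (Ne.symm hki)
                have hc0 : c k = 0 := by
                  by_contra hc0
                  exact absurd (hno k hkI0 hc0) (not_le.2 hik)
                simp [hc0]
              rw [heq]
              exact Submodule.sum_mem _ fun k hk =>
                Submodule.smul_mem _ _ (Submodule.subset_span (mem_image_finset hk))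
            obtain ⟨j, hjI0, hcj, hij⟩ := hex
            obtain ⟨hind', hspan'⟩ :=
              exchange_lemma x (hI'.1 I0 hI0mem) hiI0 hjI0 (Finset.Subset.refl I0) hc hjI0 hcj
            have hmem' : insert i (I0.erase j) ∈ I' :=
              hI'.2 I0 hI0mem _ hind' (le_of_eq hspan'.symm)
            have hdisj' : Y ∩ (insert i (I0.erase j)) = ∅ := by
              apply Finset.eq_empty_iff_forall_notMem.2
              intro a ha
              rw [Finset.mem_inter, Finset.mem_insert, Finset.mem_erase] at ha
              obtain ⟨haY, ha2⟩ := ha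
              rcases ha2 with rfl | ⟨_, haI⟩
              · exact hiY haY
              · exact hd a haY haI
            have hiej : i ∉ I0.erase j := fun h => hiI0 (Finset.mem_of_mem_erase h)
            have hcard : (insert i (I0.erase j)).card = I0.card := by
              rw [Finset.card_insert_of_notMem hiej, Finset.card_erase_of_mem hjI0]
              have : 0 < I0.card := Finset.card_pos.2 ⟨j, hjI0⟩
              omega
            refine ihk Y (insert i (I0.erase j)) hYm ?_ hmem' hdisj'
            rw [hcard, Finset.sum_insert hiej]
            have hsum3 : (j : ℕ) + (∑ b ∈ I0.erase j, (b : ℕ)) = ∑ b ∈ I0, (b : ℕ) :=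
              Finset.add_sum_erase I0 _ hjI0
            have hijN : (i : ℕ) < (j : ℕ) := hij
            omega
          · -- Move B: enlarge I0
            have hind' : IsIndepSet x (insert i I0) := indep_insert x (hI'.1 I0 hI0mem) (hx0 i) h3
            have hmem' : insert i I0 ∈ I' := by
              refine hI'.2 I0 hI0mem _ hind' (Submodule.span_mono ?_)
              exact Set.image_mono (by exact_mod_cast Finset.subset_insert i I0)
            have hdisj' : Y ∩ (insert i I0) = ∅ := by
              apply Finset.eq_empty_iff_forall_notMem.2
              intro a ha
              rw [Finset.mem_inter, Finset.mem_insert] at ha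
              obtain ⟨haY, ha2⟩ := ha
              rcases ha2 with rfl | haI
              · exact hiY haY
              · exact hd a haY haI
            have hcardlt : I0.card < N := by
              have hle : I0.card ≤ N := by
                have := Finset.card_le_univ I0
                simpa using this
              rcases lt_or_eq_of_le hle with h | h
              · exact h
              · exfalso
                have : I0 = Finset.univ := Finset.eq_univ_of_card I0 (by simp [h])
                exact hiI0 (this ▸ Finset.mem_univ i)
            refine ihk Y (insert i I0) hYm ?_ hmem' hdisj'
            rw [Finset.card_insert_of_notMem hiI0, Finset.sum_insert hiI0]
            have hNpos : 0 < N := i.pos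
            have hNM : N ≤ N * N + 1 := by nlinarith
            have hsplit : (N - I0.card) * (N * N + 1) =
                (N - (I0.card + 1)) * (N * N + 1) + (N * N + 1) := by
              have h4 : N - I0.card = (N - (I0.card + 1)) + 1 := by omega
              rw [h4, add_mul, one_mul]
            have hiN : (i : ℕ) < N := i.isLt
            set M := N * N + 1 with hM
            set A := (N - (I0.card + 1)) * M with hA
            set B := (N - I0.card) * M with hB
            omega

end ZonotopalHelpers

theorem pY_in_span_QI (n N : ℕ) (x : Fin N → Fin n → ℝ)
    (hx0 : ∀ i, x i ≠ 0) (hx : Submodule.span ℝ (Set.range x) = ⊤)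
    (I' : Set (Finset (Fin N))) (hI' : SemiExternal x I') :
    (∀ I0 ∈ I', ∀ Y : Finset (Fin N), Y ∩ I0 = ∅ →
      pProd x Y ∈ Submodule.span ℂ {p | ∃ I ∈ I', p = QB x I}) ∧
    PplusOn x I' ≤ Submodule.span ℂ {p | ∃ I ∈ I', p = QB x I} := by
  constructor
  · intro I0 hI0 Y hdisj
    exact key_lemma x hx0 I' hI' ((∑ y ∈ Y, (y : ℕ)) + 1)
      ((N - I0.card) * (N * N + 1) + (∑ b ∈ I0, (b : ℕ)) + 1) Y I0
      (Nat.lt_succ_self _) (Nat.lt_succ_self _) hI0 hdisj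
  · rw [PplusOn]
    refine Submodule.span_le.2 ?_
    rintro p ⟨Y, ⟨I0, hI0, hdisj⟩, rfl⟩
    exact key_lemma x hx0 I' hI' ((∑ y ∈ Y, (y : ℕ)) + 1)
      ((N - I0.card) * (N * N + 1) + (∑ b ∈ I0, (b : ℕ)) + 1) Y I0
      (Nat.lt_succ_self _) (Nat.lt_succ_self _) hI0 hdisj
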